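/- For the explicit transport update (Hw)^{n+1/2}_i = H_i w_i − σ_i(F_{i+1/2} w_{i+1/2} − F_{i−1/2} w_{i−1/2}) with upwind values w_{i+1/2} (equal to w_i if F_{i+1/2} ≥ 0, else w_{i+1}) and the mass update H^{n+1/2}_i = H_i − σ_i(F_{i+1/2} − F_{i−1/2}) with H^{n+1/2}_i > 0, the identity (H^{n+1/2}_i/2)(w^{n+1/2}_i)² − (H_i/2)w_i² + σ_i((w_{i+1/2}²/2)F_{i+1/2} − (w_{i−1/2}²/2)F_{i−1/2}) = (σ_i/2)[F_{i+1/2}]₋(w_{i+1}−w_i)² − (σ_i/2)[F_{i−1/2}]₊(w_i−w_{i−1})² + (H^{n+1/2}_i/2)(w^{n+1/2}_i − w_i)² holds, where w^{n+1/2}_i = (Hw)^{n+1/2}_i / H^{n+1/2}_i, [a]₊ = max(a,0), [a]₋ = min(a,0). -/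
import Mathlib

theorem stmt19 (σ Hi H1 Fp Fm wm wi wp : ℝ) (hσ : 0 < σ) (hHi : 0 < Hi) (hH1 : 0 < H1)
    (hH1def : H1 = Hi - σ * (Fp - Fm)) :
    let wph := if 0 ≤ Fp then wi else wp
    let wmh := if 0 ≤ Fm then wm else wi
    let Hw1 := Hi * wi - σ * (Fp * wph - Fm * wmh)
    let w1 := Hw1 / H1
    H1 / 2 * w1 ^ 2 - Hi / 2 * wi ^ 2 + σ * (wph ^ 2 / 2 * Fp - wmh ^ 2 / 2 * Fm)
      = σ / 2 * min Fp 0 * (wp - wi) ^ 2 - σ / 2 * max Fm 0 * (wi - wm) ^ 2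
        + H1 / 2 * (w1 - wi) ^ 2 := by
  have hne : H1 ≠ 0 := ne_of_gt hH1
  rcases le_or_gt 0 Fp with hp | hp <;> rcases le_or_gt 0 Fm with hm | hm
  · simp only [if_pos hp, if_pos hm, min_eq_right hp, max_eq_left hm]
    field_simp; rw [hH1def]; ring
  · simp only [if_pos hp, if_neg (not_le.mpr hm), min_eq_right hp, max_eq_right hm.le]
    field_simp; rw [hH1def]; ring
  · simp only [if_neg (not_le.mpr hp), if_pos hm, min_eq_left hp.le, max_eq_left hm]
    field_simp; rw [hH1def]; ring
  · simp only [if_neg (not_le.mpr hp), if_neg (not_le.mpr hm), min_eq_left hp.le,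
      max_eq_right hm.le]
    field_simp; rw [hH1def]; ring
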